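/- Let n ≥ 2, m ≥ 1 be integers and c₁ > 0. There exist a constant c > 0 and a positive integer N ≥ 3 such that: for every integer k with |k| ≥ N, every t ∈ [−π/2, 3π/2) (with t arbitrary in [−π/2, 3π/2) if n is odd), every λ ∈ ℂ with |λ − (2πk + t)^n| ≤ c₁ |k|^{n−1−1/(2m)}, and every integer p ∉ A(k,n,t), one has |λ − (2πp + t)^n| > c (ln|k|)^{−1} (||k| − |p|| + 1)(|k| + |p|)^{n−1}. -/

import Mathlib

open Real

/-- The set `T(k) = [−π/2, 3π/2) \ ((−1/ln|k|, 1/ln|k|) ∪ (π − 1/ln|k|, π + 1/ln|k|))`. -/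
def Tset (k : ℤ) : Set ℝ :=
  Set.Ico (-(π/2)) (3*π/2) \
    (Set.Ioo (-(Real.log |(k:ℝ)|)⁻¹) (Real.log |(k:ℝ)|)⁻¹ ∪
      Set.Ioo (π - (Real.log |(k:ℝ)|)⁻¹) (π + (Real.log |(k:ℝ)|)⁻¹))

private lemma aux_pow_sub (A B : ℝ) (hB : 0 ≤ B) (hBA : B ≤ A) (j : ℕ) :
    (A - B) * A ^ j ≤ A ^ (j+1) - B ^ (j+1) := by
  have h1 : B ^ j ≤ A ^ j := pow_le_pow_left₀ hB hBA j
  have h2 : 0 ≤ B ^ j := pow_nonneg hB j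
  have h3 : A ^ (j+1) = A ^ j * A := pow_succ A j
  have h4 : B ^ (j+1) = B ^ j * B := pow_succ B j
  nlinarith

private lemma absdiff_pow_ge (A B : ℝ) (hA : 0 ≤ A) (hB : 0 ≤ B) (n : ℕ) (hn : 1 ≤ n) :
    |A - B| * (max A B) ^ (n-1) ≤ |A ^ n - B ^ n| := by
  obtain ⟨j, rfl⟩ : ∃ j, n = j + 1 := ⟨n - 1, by omega⟩
  simp only [Nat.add_sub_cancel]
  rcases le_total B A with h | h
  · rw [abs_of_nonneg (sub_nonneg.2 h),
      abs_of_nonneg (sub_nonneg.2 (pow_le_pow_left₀ hB h _)), max_eq_left h]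
    exact aux_pow_sub A B hB h j
  · rw [abs_of_nonpos (sub_nonpos.2 h),
      abs_of_nonpos (sub_nonpos.2 (pow_le_pow_left₀ hA h _)), max_eq_right h,
      neg_sub, neg_sub]
    exact aux_pow_sub B A hA h j

private lemma abs_sub_le_absdiff {a b : ℝ} (h : 0 ≤ a * b) : |a - b| ≤ |(|a| - |b|)| := by
  rcases abs_cases a with ⟨h1,h2⟩|⟨h1,h2⟩ <;> rcases abs_cases b with ⟨h3,h4⟩|⟨h3,h4⟩ <;>
    rcases abs_cases (a-b) with ⟨h5,h6⟩|⟨h5,h6⟩ <;>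
    rcases abs_cases (|a|-|b|) with ⟨h7,h8⟩|⟨h7,h8⟩ <;> nlinarith

private lemma abs_add_le_absdiff {a b : ℝ} (h : a * b ≤ 0) : |a + b| ≤ |(|a| - |b|)| := by
  rcases abs_cases a with ⟨h1,h2⟩|⟨h1,h2⟩ <;> rcases abs_cases b with ⟨h3,h4⟩|⟨h3,h4⟩ <;>
    rcases abs_cases (a+b) with ⟨h5,h6⟩|⟨h5,h6⟩ <;>
    rcases abs_cases (|a|-|b|) with ⟨h7,h8⟩|⟨h7,h8⟩ <;> nlinarith


open Classical in
/-- The set `A(k,n,t) ⊆ ℤ`: equal to `{k}` if `n` is odd, or if `n` is even and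
`t ∈ T(k)`; equal to `{k, −k}` if `n` is even and `|t| < 1/ln|k|`; and equal to
`{k, −(k+1)}` if `n` is even and `|t − π| < 1/ln|k|`. -/
noncomputable def Aset (n : ℕ) (k : ℤ) (t : ℝ) : Set ℤ :=
  if Odd n then {k}
  else if |t| < (Real.log |(k:ℝ)|)⁻¹ then {k, -k}
  else if |t - π| < (Real.log |(k:ℝ)|)⁻¹ then {k, -(k+1)}
  else {k}

private lemma k_mem_Aset (n : ℕ) (k : ℤ) (t : ℝ) : k ∈ Aset n k t := by
  unfold Aset; split_ifs <;> simp [Set.mem_insert_iff]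

set_option maxHeartbeats 4000000 in
private lemma core (n : ℕ) (hn : 2 ≤ n) (k p : ℤ) (hk : 3 ≤ |k|) (t : ℝ)
    (ht : t ∈ Set.Ico (-(π/2)) (3*π/2)) (hp : p ∉ Aset n k t) :
    3/4 * (π/4)^n * (Real.log |(k:ℝ)|)⁻¹ * (|(|(k:ℝ)| - |(p:ℝ)|)| + 1)
      * (|(k:ℝ)| + |(p:ℝ)|)^(n-1)
      ≤ |(2*π*(k:ℝ) + t)^n - (2*π*(p:ℝ) + t)^n| := by
  obtain ⟨ht1, ht2⟩ := ht
  have hπ : (0:ℝ) < π := pi_pos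
  have hπ4 : π ≤ 4 := pi_le_four
  have hπ3 : 3 < π := pi_gt_three
  set K : ℝ := |(k:ℝ)| with hKdef
  set P : ℝ := |(p:ℝ)| with hPdef
  set a : ℝ := 2*π*(k:ℝ) + t with hadef
  set b : ℝ := 2*π*(p:ℝ) + t with hbdef
  have hK3 : (3:ℝ) ≤ K := by
    rw [hKdef, ← Int.cast_abs]; exact_mod_cast hk
  have hP0 : 0 ≤ P := abs_nonneg _
  have ht3 : |t| ≤ 3*π/2 := abs_le.2 ⟨by linarith, by linarith⟩
  have hlog1 : 1 ≤ Real.log K := by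
    rw [Real.le_log_iff_exp_le (by linarith)]
    have := Real.exp_one_lt_d9
    linarith
  set L : ℝ := (Real.log K)⁻¹ with hLdef
  have hL0 : 0 < L := inv_pos.2 (by linarith)
  have hL1 : L ≤ 1 := by
    rw [hLdef]
    exact inv_le_one_of_one_le₀ hlog1
  -- |a| ≥ 2πK - 3π/2 ≥ πK
  have habs2k : |2*π*(k:ℝ)| = 2*π*K := by
    rw [hKdef, abs_mul, abs_of_pos (by positivity : (0:ℝ) < 2*π)]
  have habs2p : |2*π*(p:ℝ)| = 2*π*P := by
    rw [hPdef, abs_mul, abs_of_pos (by positivity : (0:ℝ) < 2*π)]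
  have hA1 : 2*π*K - 3*π/2 ≤ |a| := by
    have h := abs_add_le a (-t)
    have : a + (-t) = 2*π*(k:ℝ) := by rw [hadef]; ring
    rw [this, habs2k, abs_neg] at h
    linarith
  have hB1 : 2*π*P - 3*π/2 ≤ |b| := by
    have h := abs_add_le b (-t)
    have : b + (-t) = 2*π*(p:ℝ) := by rw [hbdef]; ring
    rw [this, habs2p, abs_neg] at h
    linarith
  have hA2 : π*K ≤ |a| := by
    linarith [hA1, mul_nonneg hπ.le (by linarith : (0:ℝ) ≤ K - 3/2)]
  set S : ℝ := K + P with hSdef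
  have hS3 : 3 ≤ S := by rw [hSdef]; linarith
  have hS0 : 0 ≤ S := by linarith
  have hM : π/4 * S ≤ max |a| |b| := by
    rcases max_cases |a| |b| with ⟨he, hge⟩ | ⟨he, hge⟩ <;> rw [he] <;>
      linarith [hA1, hB1, mul_nonneg hπ.le (by linarith : (0:ℝ) ≤ K - 2), mul_nonneg hπ.le hP0]
  set D : ℝ := |K - P| + 1 with hDdef
  have hD1 : 1 ≤ D := by
    have := abs_nonneg (K - P); rw [hDdef]; linarith
  have hDS : D ≤ S + 1 := by
    rw [hDdef, hSdef]
    rcases abs_cases (K - P) with ⟨he, _⟩ | ⟨he, _⟩ <;> rw [he] <;> linarith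
  have hKP : |K - P| ≤ |(k:ℝ) + (p:ℝ)| := by
    have h := abs_abs_sub_abs_le_abs_sub (k:ℝ) (-(p:ℝ))
    rw [abs_neg, sub_neg_eq_add] at h
    exact h
  clear_value K P a b L S D
  -- key factorization bound
  have key : |(|a| - |b|)| * (max |a| |b|) ^ (n-1) ≤ |a^n - b^n| := by
    have h1 := abs_abs_sub_abs_le_abs_sub (a^n) (b^n)
    rw [abs_pow, abs_pow] at h1
    exact le_trans (absdiff_pow_ge |a| |b| (abs_nonneg a) (abs_nonneg b) n (by omega)) h1
  have hMpow : (π/4)^(n-1) * S^(n-1) ≤ (max |a| |b|) ^ (n-1) := by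
    rw [← mul_pow]
    exact pow_le_pow_left₀ (by positivity) hM _
  have hpowsplit : (π/4:ℝ)^(n-1) * (π/4) = (π/4)^n := by
    rw [← pow_succ]; congr 1; omega
  have hSn0 : (0:ℝ) ≤ S^(n-1) := by positivity
  -- reduction: suffices a lower bound on | |a| - |b| |
  have goal_of : ∀ _ : 3*π/16 * (L * D) ≤ |(|a| - |b|)|,
      3/4 * (π/4)^n * L * D * S^(n-1) ≤ |a^n - b^n| := by
    intro h
    calc 3/4 * (π/4)^n * L * D * S^(n-1)
        = (3*π/16 * (L * D)) * ((π/4)^(n-1) * S^(n-1)) := by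
          rw [← hpowsplit]; ring
      _ ≤ |(|a| - |b|)| * ((max |a| |b|) ^ (n-1)) := by
          apply mul_le_mul h hMpow (by positivity) (abs_nonneg _)
      _ ≤ |a^n - b^n| := key
  have hpk : p ≠ k := fun h => hp (h ▸ k_mem_Aset n k t)
  rcases le_or_gt 0 (a*b) with hab | hab
  · -- aligned signs
    apply goal_of
    have h1 : |a - b| ≤ |(|a| - |b|)| := abs_sub_le_absdiff hab
    have h2 : a - b = 2*π*((k:ℝ) - (p:ℝ)) := by rw [hadef, hbdef]; ring
    have h3 : |a - b| = 2*π*|(k:ℝ) - (p:ℝ)| := by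
      rw [h2, abs_mul, abs_of_pos (by positivity : (0:ℝ) < 2*π)]
    have h4 : (1:ℝ) ≤ |(k:ℝ) - (p:ℝ)| := by
      have : (1:ℤ) ≤ |k - p| := Int.one_le_abs (sub_ne_zero.2 (fun h => hpk h.symm))
      calc (1:ℝ) = ((1:ℤ):ℝ) := by norm_num
        _ ≤ ((|k - p|:ℤ):ℝ) := by exact_mod_cast this
        _ = |(k:ℝ) - (p:ℝ)| := by push_cast; ring_nf
    have h5 : |K - P| ≤ |(k:ℝ) - (p:ℝ)| := by
      rw [hKdef, hPdef]; exact abs_abs_sub_abs_le_abs_sub _ _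
    have hD2 : D ≤ 2 * |(k:ℝ) - (p:ℝ)| := by rw [hDdef]; linarith
    have hLD : L * D ≤ D := by
      linarith [mul_nonneg (sub_nonneg.2 hL1) (le_trans zero_le_one hD1)]
    calc 3*π/16 * (L * D) ≤ 3*π/16 * D := by
          exact mul_le_mul_of_nonneg_left hLD (by positivity)
      _ ≤ 3*π/16 * (2 * |(k:ℝ) - (p:ℝ)|) := by
          exact mul_le_mul_of_nonneg_left hD2 (by positivity)
      _ ≤ 2*π*|(k:ℝ) - (p:ℝ)| := by
          linarith [mul_nonneg hπ.le (abs_nonneg ((k:ℝ) - (p:ℝ)))]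
      _ = |a - b| := h3.symm
      _ ≤ |(|a| - |b|)| := h1
  · -- opposite signs
    have h1 : |a + b| ≤ |(|a| - |b|)| := abs_add_le_absdiff hab.le
    by_cases hjgen : k + p ≠ 0 ∧ k + p ≠ -1
    · -- generic j
      apply goal_of
      obtain ⟨hj0, hj1⟩ := hjgen
      set J : ℝ := (k:ℝ) + (p:ℝ) with hJdef
      have hab2 : a + b = 2*π*J + 2*t := by rw [hadef, hbdef, hJdef]; ring
      have hKPJ : |K - P| ≤ |J| := by
        rw [hJdef]; exact hKP
      have hLD : L * D ≤ D := by
        linarith [mul_nonneg (sub_nonneg.2 hL1) (le_trans zero_le_one hD1)]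
      rcases (by omega : 1 ≤ k + p ∨ k + p ≤ -2) with hj | hj
      · have hJ1 : (1:ℝ) ≤ J := by
          rw [hJdef]; exact_mod_cast (by exact_mod_cast hj : (1:ℤ) ≤ k + p)
        have hDJ : D ≤ J + 1 := by
          rw [hDdef]; have := abs_of_nonneg (by linarith : (0:ℝ) ≤ J); linarith [hKPJ, this ▸ hKPJ]
        have hpos : π/2*(J+1) ≤ a + b := by
          rw [hab2]; linarith [ht1, mul_le_mul_of_nonneg_left hJ1 hπ.le]
        have hX : π/2*(J+1) ≤ |(|a| - |b|)| :=
          le_trans (le_trans hpos (le_abs_self _)) h1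
        calc 3*π/16 * (L * D) ≤ 3*π/16 * (J+1) := by
              apply mul_le_mul_of_nonneg_left (le_trans hLD hDJ) (by positivity)
          _ ≤ π/2*(J+1) := by linarith [mul_nonneg hπ.le (by linarith : (0:ℝ) ≤ J + 1)]
          _ ≤ |(|a| - |b|)| := hX
      · have hJ2 : J ≤ (-2:ℝ) := by
          rw [hJdef]
          have : ((k:ℤ):ℝ) + ((p:ℤ):ℝ) = ((k + p : ℤ):ℝ) := by push_cast; ring
          rw [this]; exact_mod_cast hj
        have hDJ : D ≤ -J + 1 := by
          rw [hDdef]; have habs : |J| = -J := abs_of_nonpos (by linarith); linarith [habs ▸ hKPJ]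
        have hneg : π/4*(-J+1) ≤ -(a + b) := by
          rw [hab2]
          linarith [ht2, mul_nonneg hπ.le (by linarith : (0:ℝ) ≤ -(7*J/4 + 13/4))]
        have hX : π/4*(-J+1) ≤ |(|a| - |b|)| :=
          le_trans (le_trans hneg (neg_le_abs _)) h1
        calc 3*π/16 * (L * D) ≤ 3*π/16 * (-J+1) := by
              apply mul_le_mul_of_nonneg_left (le_trans hLD hDJ) (by positivity)
          _ ≤ π/4*(-J+1) := by linarith [mul_nonneg hπ.le (by linarith : (0:ℝ) ≤ -J + 1)]
          _ ≤ |(|a| - |b|)| := hX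
    · -- j ∈ {0, -1}
      rcases Nat.even_or_odd n with heven | hodd
      · -- n even : use the excluded-set hypotheses
        apply goal_of
        have hnodd : ¬ Odd n := (Nat.not_odd_iff_even).2 heven
        simp only [Aset, if_neg hnodd] at hp
        rw [← hKdef, ← hLdef] at hp
        rcases (by tauto : k + p = 0 ∨ k + p = -1) with hj | hj
        · -- p = -k
          have hpk' : (p:ℝ) = -(k:ℝ) := by
            have : p = -k := by omega
            rw [this]; push_cast; ring
          have hPK : P = K := by rw [hPdef, hKdef, hpk', abs_neg]
          have hDeq : D = 1 := by rw [hDdef, hPK]; simp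
          have hT : L ≤ |t| := by
            split_ifs at hp with h1' h2'
            · exact absurd (by simp only [Set.mem_insert_iff, Set.mem_singleton_iff]; right; omega) hp
            · exact not_lt.1 h1'
            · exact not_lt.1 h1'
          have hab2 : a + b = 2*t := by rw [hadef, hbdef, hpk']; ring
          have hX : 2*|t| ≤ |(|a| - |b|)| := by
            have h2 : |a + b| = 2*|t| := by rw [hab2, abs_mul, abs_two]
            linarith [h2 ▸ h1]
          rw [hDeq]
          linarith [hX, hT, hL0.le, mul_le_mul_of_nonneg_right hπ4 hL0.le]
        · -- p = -(k+1)
          have hpk' : (p:ℝ) = -(k:ℝ) - 1 := by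
            have : p = -k - 1 := by omega
            rw [this]; push_cast; ring
          have hT : L ≤ |t - π| := by
            split_ifs at hp with h1' h2'
            · have h6 := abs_lt.1 (lt_of_lt_of_le h1' hL1)
              have h5 := neg_le_abs (t - π)
              linarith
            · exact absurd (by simp only [Set.mem_insert_iff, Set.mem_singleton_iff]; right; omega) hp
            · exact not_lt.1 h2'
          have hab2 : a + b = 2*(t - π) := by rw [hadef, hbdef, hpk']; ring
          have hJ : (k:ℝ) + (p:ℝ) = -1 := by rw [hpk']; ring
          have hD2 : D ≤ 2 := by
            rw [hDdef]
            have := hJ ▸ hKP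
            simp only [abs_neg, abs_one] at this
            linarith
          have hX : 2*|t - π| ≤ |(|a| - |b|)| := by
            have h2 : |a + b| = 2*|t - π| := by rw [hab2, abs_mul, abs_two]
            linarith [h2 ▸ h1]
          have e1 : L * D ≤ L * 2 := mul_le_mul_of_nonneg_left hD2 hL0.le
          calc 3*π/16 * (L * D) ≤ 3*π/16 * (L * 2) := by
                apply mul_le_mul_of_nonneg_left e1 (by positivity)
            _ ≤ 2*L := by linarith [mul_le_mul_of_nonneg_right hπ4 hL0.le]
            _ ≤ 2*|t - π| := by linarith
            _ ≤ |(|a| - |b|)| := hX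
      · -- n odd : |a^n - b^n| = |a|^n + |b|^n ≥ max^n
        have hsum : (max |a| |b|)^n ≤ |a^n - b^n| := by
          rcases mul_neg_iff.1 hab with ⟨ha', hb'⟩ | ⟨ha', hb'⟩
          · have h2 : b^n < 0 := hodd.pow_neg hb'
            have h3 : 0 < a^n := pow_pos ha' n
            rw [abs_of_nonneg (by linarith : (0:ℝ) ≤ a^n - b^n)]
            rcases max_cases |a| |b| with ⟨he,_⟩|⟨he,_⟩ <;> rw [he]
            · rw [abs_of_pos ha']; linarith
            · rw [abs_of_neg hb', hodd.neg_pow b]; linarith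
          · have h2 : a^n < 0 := hodd.pow_neg ha'
            have h3 : 0 < b^n := pow_pos hb' n
            rw [abs_of_nonpos (by linarith : a^n - b^n ≤ 0), neg_sub]
            rcases max_cases |a| |b| with ⟨he,_⟩|⟨he,_⟩ <;> rw [he]
            · rw [abs_of_neg ha', hodd.neg_pow a]; linarith
            · rw [abs_of_pos hb']; linarith
        have e1 : ((π/4)*S)^n ≤ (max |a| |b|)^n := pow_le_pow_left₀ (by positivity) hM n
        have e2 : ((π/4)*S : ℝ)^n = (π/4)^n * (S^(n-1) * S) := by
          rw [mul_pow]; congr 1; rw [← pow_succ]; congr 1; omega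
        have hLD : L * D ≤ D := by
          linarith [mul_nonneg (sub_nonneg.2 hL1) (le_trans zero_le_one hD1)]
        have e3 : 3/4 * (L * D) ≤ S := by linarith [hLD, hDS, hS3]
        calc 3/4 * (π/4)^n * L * D * S^(n-1)
            = (3/4 * (L * D)) * ((π/4)^n * S^(n-1)) := by ring
          _ ≤ S * ((π/4)^n * S^(n-1)) := by
              apply mul_le_mul_of_nonneg_right e3 (by positivity)
          _ = ((π/4)*S)^n := by rw [e2]; ring
          _ ≤ (max |a| |b|)^n := e1
          _ ≤ |a^n - b^n| := hsum

set_option maxHeartbeats 1000000 in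
/-- Let `n ≥ 2, m ≥ 1` be integers and `c₁ > 0`. There exist a constant
`c > 0` and a positive integer `N ≥ 3` such that: for every integer `k` with `|k| ≥ N`,
every `t ∈ [−π/2, 3π/2)`, every `λ ∈ ℂ` with `|λ − (2πk + t)^n| ≤ c₁ |k|^{n−1−1/(2m)}`,
and every integer `p ∉ A(k,n,t)`, one has
`|λ − (2πp + t)^n| > c (ln|k|)⁻¹ (||k| − |p|| + 1)(|k| + |p|)^{n−1}`. -/
theorem stmt_4 (n m : ℕ) (hn : 2 ≤ n) (hm : 1 ≤ m) (c₁ : ℝ) (hc₁ : 0 < c₁) :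
    ∃ c : ℝ, 0 < c ∧ ∃ N : ℕ, 3 ≤ N ∧
      ∀ k : ℤ, (N : ℤ) ≤ |k| →
        ∀ t ∈ Set.Ico (-(π/2)) (3*π/2),
          ∀ lam : ℂ,
            ‖lam - ((2*π*(k:ℝ) + t : ℝ) : ℂ)^n‖
              ≤ c₁ * |(k:ℝ)| ^ ((n:ℝ) - 1 - 1/(2*(m:ℝ))) →
            ∀ p : ℤ, p ∉ Aset n k t →
              ‖lam - ((2*π*(p:ℝ) + t : ℝ) : ℂ)^n‖ >
                c * (Real.log |(k:ℝ)|)⁻¹ * (|(|(k:ℝ)| - |(p:ℝ)|)| + 1)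
                  * (|(k:ℝ)| + |(p:ℝ)|)^(n-1) := by
  have hπ : (0:ℝ) < π := pi_pos
  set c₀ : ℝ := 3/4 * (π/4)^n with hc₀def
  have hc₀ : 0 < c₀ := by positivity
  have hr : (0:ℝ) < 1/(2*(m:ℝ)) := by
    have : (0:ℝ) < (m:ℝ) := by exact_mod_cast hm
    positivity
  have hlit := (isLittleO_log_rpow_atTop hr).def
    (show (0:ℝ) < c₀/(2*c₁) by positivity)
  rw [Filter.eventually_atTop] at hlit
  obtain ⟨N₀, hN₀⟩ := hlit
  refine ⟨c₀/4, by positivity, max 3 ⌈N₀⌉₊, le_max_left _ _, ?_⟩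
  intro k hk t ht lam hlam p hp
  set K : ℝ := |(k:ℝ)| with hKdef
  set P : ℝ := |(p:ℝ)| with hPdef
  have hkk : ((max 3 ⌈N₀⌉₊ : ℕ):ℝ) ≤ K := by
    rw [hKdef, ← Int.cast_abs]; exact_mod_cast hk
  have h3K : (3:ℝ) ≤ K := by
    refine le_trans ?_ hkk
    exact_mod_cast Nat.cast_le.2 (le_max_left 3 ⌈N₀⌉₊)
  have hk3' : (3:ℤ) ≤ |k| := by
    refine le_trans ?_ hk
    exact_mod_cast le_max_left 3 ⌈N₀⌉₊
  have hKN₀ : N₀ ≤ K := by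
    refine le_trans (le_trans (Nat.le_ceil N₀) ?_) hkk
    exact_mod_cast Nat.cast_le.2 (le_max_right 3 ⌈N₀⌉₊)
  have hK0 : (0:ℝ) < K := by linarith
  have hlog1 : 1 ≤ Real.log K := by
    rw [Real.le_log_iff_exp_le hK0]
    have := Real.exp_one_lt_d9
    linarith
  have hL0 : 0 < (Real.log K)⁻¹ := inv_pos.2 (by linarith)
  have hN := hN₀ K hKN₀
  rw [Real.norm_eq_abs, Real.norm_eq_abs, abs_of_nonneg (by linarith),
    abs_of_nonneg (Real.rpow_nonneg hK0.le _)] at hN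
  set r : ℝ := 1/(2*(m:ℝ)) with hrdef
  have hr0 : (0:ℝ) < K ^ r := Real.rpow_pos_of_pos hK0 _
  -- the core bound
  have hcore := core n hn k p hk3' t ht hp
  rw [← hKdef, ← hPdef] at hcore
  set D : ℝ := |K - P| + 1 with hDdef
  set S : ℝ := K + P with hSdef
  have hP0 : 0 ≤ P := abs_nonneg _
  have hD1 : (1:ℝ) ≤ D := by
    have := abs_nonneg (K - P); rw [hDdef]; linarith
  have hS3 : (3:ℝ) ≤ S := by rw [hSdef]; linarith
  have hSp0 : (0:ℝ) < S^(n-1) := pow_pos (by linarith) _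
  -- bound on the perturbation term
  have hexp : (n:ℝ) - 1 - r = ((n-1:ℕ):ℝ) - r := by
    rw [Nat.cast_sub (by omega : 1 ≤ n)]; push_cast; ring
  have hsplit : K ^ ((n:ℝ) - 1 - r) = K^(n-1) / K^r := by
    rw [hexp, Real.rpow_sub hK0, Real.rpow_natCast]
  have hstep : c₁ * Real.log K ≤ (c₀/2) * K ^ r := by
    calc c₁ * Real.log K ≤ c₁ * (c₀/(2*c₁) * K^r) :=
          mul_le_mul_of_nonneg_left hN hc₁.le
      _ = (c₀/2) * K^r := by field_simp
  have hstep2 : c₁ / K ^ r ≤ (c₀/2) * (Real.log K)⁻¹ := by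
    have hlogpos : (0:ℝ) < Real.log K := by linarith
    have h2 : c₁ ≤ (c₀/2) * K^r / Real.log K := (le_div_iff₀ hlogpos).2 hstep
    calc c₁ / K^r ≤ ((c₀/2) * K^r / Real.log K) / K^r := by gcongr
      _ = (c₀/2) * (Real.log K)⁻¹ := by field_simp
  have hKn : K^(n-1) ≤ D * S^(n-1) := by
    calc K^(n-1) ≤ S^(n-1) := by
          apply pow_le_pow_left₀ hK0.le (by rw [hSdef]; linarith)
      _ = 1 * S^(n-1) := by ring
      _ ≤ D * S^(n-1) := mul_le_mul_of_nonneg_right hD1 hSp0.le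
  have B1 : c₁ * K ^ ((n:ℝ) - 1 - r) ≤ (c₀/2) * (Real.log K)⁻¹ * (D * S^(n-1)) := by
    rw [hsplit]
    calc c₁ * (K^(n-1) / K^r) = (c₁ / K^r) * K^(n-1) := by ring
      _ ≤ ((c₀/2) * (Real.log K)⁻¹) * (D * S^(n-1)) := by
          apply mul_le_mul hstep2 hKn (by positivity) (by positivity)
  -- triangle inequality
  have hcast : ((2*π*(k:ℝ) + t : ℝ) : ℂ)^n - ((2*π*(p:ℝ) + t : ℝ) : ℂ)^n
      = ((((2*π*(k:ℝ)+t)^n - (2*π*(p:ℝ)+t)^n : ℝ)) : ℂ) := by push_cast; ring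
  have htri : |(2*π*(k:ℝ)+t)^n - (2*π*(p:ℝ)+t)^n|
      ≤ ‖lam - ((2*π*(k:ℝ) + t : ℝ) : ℂ)^n‖
        + ‖lam - ((2*π*(p:ℝ) + t : ℝ) : ℂ)^n‖ := by
    have h := norm_sub_le_norm_sub_add_norm_sub (((2*π*(k:ℝ) + t : ℝ) : ℂ)^n) lam
      (((2*π*(p:ℝ) + t : ℝ) : ℂ)^n)
    rw [hcast, Complex.norm_real, Real.norm_eq_abs] at h
    rw [norm_sub_rev (((2*π*(k:ℝ) + t : ℝ) : ℂ)^n) lam] at h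
    exact h
  -- finish
  have hX : (0:ℝ) < (Real.log K)⁻¹ * (D * S^(n-1)) := by positivity
  have hmul : 0 < c₀/4 * ((Real.log K)⁻¹ * (D * S^(n-1))) := by positivity
  calc (c₀/4) * (Real.log K)⁻¹ * D * S^(n-1)
      = c₀ * (Real.log K)⁻¹ * D * S^(n-1)
        - (c₀/2) * (Real.log K)⁻¹ * (D * S^(n-1))
        - c₀/4 * ((Real.log K)⁻¹ * (D * S^(n-1))) := by ring
    _ < c₀ * (Real.log K)⁻¹ * D * S^(n-1)
        - (c₀/2) * (Real.log K)⁻¹ * (D * S^(n-1)) := by linarith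
    _ ≤ |(2*π*(k:ℝ)+t)^n - (2*π*(p:ℝ)+t)^n|
        - c₁ * K ^ ((n:ℝ) - 1 - r) := by
        have : c₀ * (Real.log K)⁻¹ * D * S^(n-1)
            = 3/4 * (π/4)^n * (Real.log K)⁻¹ * D * S^(n-1) := by rw [hc₀def]
        linarith [hcore, B1]
    _ ≤ ‖lam - ((2*π*(p:ℝ) + t : ℝ) : ℂ)^n‖ := by linarith [htri, hlam]
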